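/- arXiv:1604.04524 — 4 statements merged into one kernel-verified Lean document; each statement's English description precedes it below -/
import Mathlib

section
/- Let n ≥ 2 be an integer, let p₁,…,pₙ ≥ 1 be integers with pᵢ ≥ 2 for at least one index i, and let z be an n×n matrix of complex numbers of modulus one with z_{ij} = conj(z_{ji}) for all i,j and z_{ii} = 1 for all i. Let A be a unital C*-algebra containing unitaries u₁,…,uₙ satisfying uᵢ^{pᵢ} uⱼ^{pⱼ} = z_{ij} uⱼ^{pⱼ} uᵢ^{pᵢ} for all 1 ≤ i,j ≤ n, and suppose A has the universal property for these relations: for every unital C*-algebra B and unitaries w₁,…,wₙ in B satisfying wᵢ^{pᵢ} wⱼ^{pⱼ} = z_{ij} wⱼ^{pⱼ} wᵢ^{pᵢ} for all i,j, there exists a unital *-homomorphism φ : A → B with φ(uᵢ) = wᵢ for all i. Then A is not simple, i.e. A possesses a closed two-sided ideal different from {0} and from A. -/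
set_option maxHeartbeats 1000000
set_option synthInstance.maxHeartbeats 200000
open scoped ENNReal
open scoped CStarAlgebra

noncomputable section
namespace Stmt0Aux
variable {G : Type*} [AddCommGroup G]

lemma two_toReal_pos : (0:ℝ) < (2 : ℝ≥0∞).toReal := by norm_num

lemma memℓp_shift (φ : G → ℂ) (hφ : ∀ x, ‖φ x‖ = 1) (v : G)
    (f : lp (fun _ : G => ℂ) 2) :
    Memℓp (fun x => φ x * f (x - v)) 2 := by
  have hf : Summable fun x : G => ‖f x‖ ^ (2 : ℝ≥0∞).toReal :=
    (memℓp_gen_iff two_toReal_pos).1 (lp.memℓp f)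
  apply memℓp_gen
  have h2 : Summable fun x : G => ‖f (x - v)‖ ^ (2 : ℝ≥0∞).toReal :=
    ((Equiv.subRight v).summable_iff (f := fun x : G => ‖f x‖ ^ (2 : ℝ≥0∞).toReal)).2 hf
  refine h2.congr fun x => ?_
  have : ‖φ x * f (x - v)‖ = ‖f (x - v)‖ := by
    rw [norm_mul]; simp [hφ]
  rw [this]

def shiftLIE (φ : G → ℂ) (hφ : ∀ x, ‖φ x‖ = 1) (v : G) :
    lp (fun _ : G => ℂ) 2 ≃ₗᵢ[ℂ] lp (fun _ : G => ℂ) 2 where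
  toFun f := ⟨fun x => φ x * f (x - v), memℓp_shift φ hφ v f⟩
  invFun g := ⟨fun y => (φ (y + v))⁻¹ * g (y + v), by
    have h1 : ∀ y : G, ‖(φ (y + v))⁻¹‖ = 1 := fun y => by
      rw [norm_inv, hφ]; norm_num
    show Memℓp (fun y => (φ (y + v))⁻¹ * g (y + v)) 2
    simpa [sub_neg_eq_add] using memℓp_shift (fun y => (φ (y + v))⁻¹) h1 (-v) g⟩
  left_inv f := by
    apply lp.ext; funext x
    have hne : φ (x + v) ≠ 0 := by
      intro h; have := hφ (x + v); rw [h] at this; simp at this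
    show (φ (x + v))⁻¹ * (φ (x + v) * f (x + v - v)) = f x
    rw [add_sub_cancel_right, inv_mul_cancel_left₀ hne]
  right_inv g := by
    apply lp.ext; funext x
    have hne : φ x ≠ 0 := by
      intro h; have := hφ x; rw [h] at this; simp at this
    show φ x * ((φ (x - v + v))⁻¹ * g (x - v + v)) = g x
    rw [sub_add_cancel, mul_inv_cancel_left₀ hne]
  map_add' f g := by
    apply lp.ext; funext x
    show φ x * (f + g) (x - v) = _
    rw [lp.coeFn_add]
    show φ x * (f (x - v) + g (x - v)) = _
    rw [mul_add]
    rfl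
  map_smul' c f := by
    apply lp.ext; funext x
    show φ x * (c • f) (x - v) = _
    rw [lp.coeFn_smul]
    show φ x * (c • f (x - v)) = c • (φ x * f (x - v))
    simp [smul_eq_mul]; ring
  norm_map' f := by
    show ‖(⟨fun x => φ x * f (x - v), memℓp_shift φ hφ v f⟩ : lp (fun _ : G => ℂ) 2)‖ = ‖f‖
    rw [lp.norm_eq_tsum_rpow two_toReal_pos, lp.norm_eq_tsum_rpow two_toReal_pos]
    congr 1
    rw [← Equiv.tsum_eq (Equiv.subRight v) (fun y => ‖f y‖ ^ (2 : ℝ≥0∞).toReal)]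
    refine tsum_congr fun x => ?_
    show ‖φ x * f (x - v)‖ ^ _ = _
    have : ‖φ x * f (x - v)‖ = ‖f (x - v)‖ := by
      rw [norm_mul]; simp [hφ]
    rw [this]
    rfl

@[simp] lemma shiftLIE_apply (φ : G → ℂ) (hφ : ∀ x, ‖φ x‖ = 1) (v : G)
    (f : lp (fun _ : G => ℂ) 2) (x : G) :
    (shiftLIE φ hφ v f : ∀ _ : G, ℂ) x = φ x * f (x - v) := rfl

end Stmt0Aux

namespace Stmt0Aux
noncomputable section
universe u
variable {n : ℕ}

def gamma (c : Fin n → Fin n → ℂ) (i : Fin n) (x : ULift.{u} (Fin n → ℤ)) : ℂ :=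
  ∏ j, c i j ^ (x.down j)

lemma abs_gamma (c : Fin n → Fin n → ℂ) (hc : ∀ i j, ‖c i j‖ = 1)
    (i : Fin n) (x : ULift.{u} (Fin n → ℤ)) : ‖gamma c i x‖ = 1 := by
  unfold gamma
  rw [norm_prod]
  refine Finset.prod_eq_one fun j _ => ?_
  rw [norm_zpow, hc, one_zpow]

lemma gamma_sub (c : Fin n → Fin n → ℂ) (hc : ∀ i j, ‖c i j‖ = 1)
    (i j : Fin n) (x : ULift.{u} (Fin n → ℤ)) :
    gamma c i (x - ULift.up (Pi.single j (1:ℤ))) = gamma c i x * (c i j)⁻¹ := by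
  have hne : ∀ a b, c a b ≠ 0 := fun a b h => by
    have := hc a b; rw [h] at this; simp at this
  unfold gamma
  have hdown : (x - ULift.up (Pi.single j (1:ℤ))).down = x.down - Pi.single j (1:ℤ) := rfl
  have : ∀ l : Fin n, c i l ^ ((x - ULift.up (Pi.single j (1:ℤ))).down l) =
      c i l ^ (x.down l) * (c i l ^ ((Pi.single j 1 : Fin n → ℤ) l))⁻¹ := by
    intro l
    rw [hdown, Pi.sub_apply, zpow_sub₀ (hne i l), div_eq_mul_inv]

  rw [Finset.prod_congr rfl fun l _ => this l, Finset.prod_mul_distrib]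
  congr 1
  rw [Finset.prod_eq_single j
    (fun b _ hb => by simp [Pi.single_apply, if_neg hb])
    (fun h => absurd (Finset.mem_univ j) h)]
  rw [Pi.single_eq_same, zpow_one]

abbrev HS (n : ℕ) := lp (fun _ : ULift.{u} (Fin n → ℤ) => ℂ) 2

def Wop (c : Fin n → Fin n → ℂ) (hc : ∀ i j, ‖c i j‖ = 1) (i : Fin n) :
    HS.{u} n →L[ℂ] HS.{u} n :=
  (shiftLIE (gamma c i) (abs_gamma c hc i) (ULift.up (Pi.single i 1)) : HS.{u} n →L[ℂ] HS.{u} n)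

lemma Wop_unitary (c : Fin n → Fin n → ℂ) (hc : ∀ i j, ‖c i j‖ = 1) (i : Fin n) :
    Wop.{u} c hc i ∈ unitary (HS.{u} n →L[ℂ] HS.{u} n) :=
  (Unitary.linearIsometryEquiv.symm (shiftLIE (gamma c i) (abs_gamma c hc i)
    (ULift.up (Pi.single i 1)))).property

lemma Wop_apply (c : Fin n → Fin n → ℂ) (hc : ∀ i j, ‖c i j‖ = 1) (i : Fin n)
    (f : HS.{u} n) (x : ULift.{u} (Fin n → ℤ)) :
    (Wop c hc i f : ∀ _ : ULift.{u} (Fin n → ℤ), ℂ) x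
      = gamma c i x * f (x - ULift.up (Pi.single i 1)) := rfl

lemma Wop_comm (c : Fin n → Fin n → ℂ) (hc : ∀ i j, ‖c i j‖ = 1) (i j : Fin n) :
    Wop.{u} c hc i * Wop.{u} c hc j = (c i j * (c j i)⁻¹) • (Wop.{u} c hc j * Wop.{u} c hc i) := by
  have hne : ∀ a b, c a b ≠ 0 := fun a b h => by
    have := hc a b; rw [h] at this; simp at this
  refine ContinuousLinearMap.ext fun f => ?_
  apply lp.ext; funext x
  rw [ContinuousLinearMap.mul_apply]
  rw [Wop_apply, Wop_apply]
  have hsmul : (((c i j * (c j i)⁻¹) • (Wop c hc j * Wop c hc i)) f : ∀ _ : ULift.{u} (Fin n → ℤ), ℂ) x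
      = (c i j * (c j i)⁻¹) * ((Wop c hc j * Wop c hc i) f x) := by
    rw [ContinuousLinearMap.smul_apply, lp.coeFn_smul, Pi.smul_apply, smul_eq_mul]
  rw [hsmul, ContinuousLinearMap.mul_apply, Wop_apply, Wop_apply]
  rw [gamma_sub c hc j i, gamma_sub c hc i j]
  rw [sub_right_comm]
  field_simp [hne i j, hne j i]
end
end Stmt0Aux

namespace Stmt0Aux

lemma pow_comm_smul {B : Type*} [Ring B] [Module ℂ B] [SMulCommClass ℂ B B]
    [IsScalarTower ℂ B B] {a b : B} {μ : ℂ}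
    (h : a * b = μ • (b * a)) (s t : ℕ) :
    a ^ s * b ^ t = μ ^ (s * t) • (b ^ t * a ^ s) := by
  have key : ∀ t : ℕ, a * b ^ t = μ ^ t • (b ^ t * a) := by
    intro t
    induction t with
    | zero => simp
    | succ t ih =>
      rw [pow_succ' b, ← mul_assoc, h, smul_mul_assoc, mul_assoc, ih, mul_smul_comm,
        smul_smul, ← mul_assoc, ← pow_succ' b, pow_succ μ, mul_comm (μ ^ t) μ]
  induction s with
  | zero => simp
  | succ s ih =>
    rw [pow_succ' a, mul_assoc, ih, mul_smul_comm, ← mul_assoc, key, smul_mul_assoc,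
      smul_smul, mul_assoc, ← pow_succ' a]
    congr 1
    rw [← pow_add]
    congr 1
    ring

lemma comm_unitary {B : Type*} [Monoid B] [StarMul B] [MulAction ℂ B]
    [SMulCommClass ℂ B B] [IsScalarTower ℂ B B] {a b : B} {μ : ℂ}
    (ha : a ∈ unitary B) (hb : b ∈ unitary B) (h : a * b = μ • (b * a)) :
    a * b * star a * star b = μ • 1 := by
  have h1 : a * star a = 1 := Unitary.mul_star_self_of_mem ha
  have h2 : b * star b = 1 := Unitary.mul_star_self_of_mem hb
  calc a * b * star a * star b = (a * b) * (star a * star b) := by rw [mul_assoc]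
    _ = (μ • (b * a)) * (star a * star b) := by rw [h]
    _ = μ • (b * (a * star a) * star b) := by
        rw [smul_mul_assoc]; congr 1
        rw [mul_assoc, mul_assoc, mul_assoc]
    _ = μ • 1 := by rw [h1, mul_one, h2]

noncomputable def root (w : ℂ) (q : ℕ) : ℂ := Complex.exp ((w.arg / q : ℝ) * Complex.I)

lemma abs_root (w : ℂ) (q : ℕ) : ‖root w q‖ = 1 :=
  Complex.norm_exp_ofReal_mul_I _

lemma root_pow {w : ℂ} (hw : ‖w‖ = 1) {q : ℕ} (hq : q ≠ 0) :
    root w q ^ q = w := by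
  rw [root, ← Complex.exp_nat_mul]
  have hqc : (q:ℂ) ≠ 0 := Nat.cast_ne_zero.mpr hq
  have : (q : ℂ) * ((w.arg / q : ℝ) * Complex.I) = (w.arg : ℝ) * Complex.I := by
    push_cast
    rw [← mul_assoc, mul_div_assoc', mul_comm (q:ℂ) _, ← mul_div_assoc', div_self hqc, mul_one]
  rw [this]
  have := Complex.norm_mul_exp_arg_mul_I w
  rwa [hw, Complex.ofReal_one, one_mul] at this

noncomputable def eps (q : ℕ) : ℂ := Complex.exp ((2 * Real.pi / q : ℝ) * Complex.I)

lemma abs_eps (q : ℕ) : ‖eps q‖ = 1 := Complex.norm_exp_ofReal_mul_I _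

lemma eps_pow {q : ℕ} (hq : q ≠ 0) : eps q ^ q = 1 := by
  rw [eps, ← Complex.exp_nat_mul]
  have hqc : (q:ℂ) ≠ 0 := Nat.cast_ne_zero.mpr hq
  have : (q : ℂ) * ((2 * Real.pi / q : ℝ) * Complex.I) = 2 * Real.pi * Complex.I := by
    push_cast
    rw [← mul_assoc, mul_div_assoc', mul_comm (q:ℂ) _, ← mul_div_assoc', div_self hqc, mul_one]
  rw [this, Complex.exp_two_pi_mul_I]

lemma eps_ne_one {q : ℕ} (hq : 2 ≤ q) : eps q ≠ 1 := by
  intro h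
  rw [eps, Complex.exp_eq_one_iff] at h
  obtain ⟨m, hm⟩ := h
  have hI : (Complex.I : ℂ) ≠ 0 := Complex.I_ne_zero
  have hm' : ((2 * Real.pi / q : ℝ) : ℂ) * Complex.I = ((m : ℂ) * (2 * Real.pi)) * Complex.I := by
    rw [hm]; ring
  have h2 : ((2 * Real.pi / q : ℝ) : ℂ) = (m : ℂ) * (2 * Real.pi) :=
    mul_right_cancel₀ hI hm'
  have h3 : (2 * Real.pi / q : ℝ) = (m : ℝ) * (2 * Real.pi) := by
    exact_mod_cast h2
  have hπ : 0 < Real.pi := Real.pi_pos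
  have hq0 : (0:ℝ) < q := by positivity
  have hq2 : (2:ℝ) ≤ (q:ℝ) := by exact_mod_cast hq
  have hlt : 2 * Real.pi / q < 2 * Real.pi := by
    rw [div_lt_iff₀ hq0]
    nlinarith
  have hgt : 0 < 2 * Real.pi / q := by positivity
  rcases le_or_gt m 0 with hm0 | hm0
  · have : (m:ℝ) * (2*Real.pi) ≤ 0 := by
      apply mul_nonpos_of_nonpos_of_nonneg
      · exact_mod_cast hm0
      · positivity
    rw [h3] at hgt; nlinarith
  · have hm1 : (1:ℝ) ≤ (m:ℝ) := by exact_mod_cast hm0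
    have : 2*Real.pi ≤ (m:ℝ) * (2*Real.pi) := by nlinarith
    rw [h3] at hlt; nlinarith

end Stmt0Aux

namespace Stmt0Aux
noncomputable section
variable {n : ℕ}


def cmat (z : Fin n → Fin n → ℂ) (p : Fin n → ℕ) (a0 b0 : Fin n) (q0 : ℕ) (m : Bool) :
    Fin n → Fin n → ℂ := fun i j =>
  if i < j then
    (if m = true ∧ i = a0 ∧ j = b0 then eps q0 * root (z i j) (p i * p j)
     else root (z i j) (p i * p j))
  else 1

lemma cmat_abs (z : Fin n → Fin n → ℂ) (p : Fin n → ℕ) (a0 b0 : Fin n) (q0 : ℕ) (m : Bool) :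
    ∀ i j, ‖cmat z p a0 b0 q0 m i j‖ = 1 := by
  intro i j
  unfold cmat
  split_ifs with h1 h2
  · rw [norm_mul, abs_eps, abs_root, one_mul]
  · exact abs_root _ _
  · exact norm_one

variable {z : Fin n → Fin n → ℂ} {p : Fin n → ℕ} {a0 b0 : Fin n} {q0 : ℕ}

lemma cmat_pow_lt (hzmod : ∀ i j, ‖z i j‖ = 1) (hp : ∀ i, 1 ≤ p i)
    (hq0 : q0 = p a0 * p b0) (m : Bool) {i j : Fin n} (hij : i < j) :
    (cmat z p a0 b0 q0 m i j) ^ (p i * p j) = z i j := by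
  have hne : p i * p j ≠ 0 := by
    have := hp i; have := hp j; positivity
  unfold cmat
  rw [if_pos hij]
  split_ifs with h
  · obtain ⟨-, ha, hb⟩ := h
    subst ha; subst hb
    rw [mul_pow, root_pow (hzmod _ _) hne, ← hq0, eps_pow (by omega), one_mul]
  · exact root_pow (hzmod _ _) hne

lemma cmat_rel (hzmod : ∀ i j, ‖z i j‖ = 1)
    (hzconj : ∀ i j, z i j = starRingEnd ℂ (z j i)) (hzdiag : ∀ i, z i i = 1)
    (hp : ∀ i, 1 ≤ p i) (hq0 : q0 = p a0 * p b0) (m : Bool) (i j : Fin n) :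
    (cmat z p a0 b0 q0 m i j * (cmat z p a0 b0 q0 m j i)⁻¹) ^ (p i * p j) = z i j := by
  rcases lt_trichotomy i j with hij | rfl | hij
  · have h2 : cmat z p a0 b0 q0 m j i = 1 := if_neg (by exact fun h => absurd (h.trans hij) (lt_irrefl j))
    rw [h2, inv_one, mul_one]
    exact cmat_pow_lt hzmod hp hq0 m hij
  · have h2 : cmat z p a0 b0 q0 m i i = 1 := if_neg (lt_irrefl i)
    rw [h2, inv_one, mul_one, one_pow, hzdiag]
  · have h1 : cmat z p a0 b0 q0 m i j = 1 := if_neg (by exact fun h => absurd (h.trans hij) (lt_irrefl i))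
    rw [h1, one_mul, inv_pow]
    rw [mul_comm (p i) (p j), cmat_pow_lt hzmod hp hq0 m hij]
    rw [Complex.inv_eq_conj (hzmod j i)]
    exact (hzconj i j).symm

lemma cmat_mu_ne (hzmod : ∀ i j, ‖z i j‖ = 1) (hq02 : 2 ≤ q0)
    {k j : Fin n}
    (hcase : (k < j ∧ a0 = k ∧ b0 = j) ∨ (j < k ∧ a0 = j ∧ b0 = k)) :
    cmat z p a0 b0 q0 true k j * (cmat z p a0 b0 q0 true j k)⁻¹ ≠
      cmat z p a0 b0 q0 false k j * (cmat z p a0 b0 q0 false j k)⁻¹ := by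
  have hεabs := abs_eps q0
  have hεne : eps q0 ≠ 1 := eps_ne_one hq02
  have hεne0 : eps q0 ≠ 0 := by
    intro h; rw [h] at hεabs; simp at hεabs
  rcases hcase with ⟨hlt, hak, hbj⟩ | ⟨hlt, hak, hbj⟩
  · subst hak; subst hbj
    have hrootne : root (z a0 b0) (p a0 * p b0) ≠ 0 := by
      intro h
      have := abs_root (z a0 b0) (p a0 * p b0)
      rw [h] at this; simp at this
    have hjk1 : ∀ m, cmat z p a0 b0 q0 m b0 a0 = 1 :=
      fun m => if_neg (fun h => absurd (h.trans hlt) (lt_irrefl b0))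
    have ht : cmat z p a0 b0 q0 true a0 b0 = eps q0 * root (z a0 b0) (p a0 * p b0) := by
      unfold cmat; rw [if_pos hlt, if_pos ⟨rfl, rfl, rfl⟩]
    have hf : cmat z p a0 b0 q0 false a0 b0 = root (z a0 b0) (p a0 * p b0) := by
      unfold cmat; rw [if_pos hlt, if_neg (by simp)]
    simp only [hjk1, inv_one, mul_one, ht, hf]
    intro h
    apply hεne
    field_simp at h
    exact h
  · subst hak; subst hbj
    have hrootne : root (z a0 b0) (p a0 * p b0) ≠ 0 := by
      intro h
      have := abs_root (z a0 b0) (p a0 * p b0)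
      rw [h] at this; simp at this
    have hkj1 : ∀ m, cmat z p a0 b0 q0 m b0 a0 = 1 :=
      fun m => if_neg (fun h => absurd (h.trans hlt) (lt_irrefl b0))
    have ht : cmat z p a0 b0 q0 true a0 b0 = eps q0 * root (z a0 b0) (p a0 * p b0) := by
      unfold cmat; rw [if_pos hlt, if_pos ⟨rfl, rfl, rfl⟩]
    have hf : cmat z p a0 b0 q0 false a0 b0 = root (z a0 b0) (p a0 * p b0) := by
      unfold cmat; rw [if_pos hlt, if_neg (by simp)]
    simp only [hkj1, one_mul, ht, hf]
    intro h
    apply hεne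
    have h2 : eps q0 * root (z a0 b0) (p a0 * p b0) = root (z a0 b0) (p a0 * p b0) := by
      have h4 := congrArg (fun t : ℂ => t⁻¹) h
      simpa [inv_inv] using h4
    have h3 : eps q0 * root (z a0 b0) (p a0 * p b0)
        = 1 * root (z a0 b0) (p a0 * p b0) := by rw [h2, one_mul]
    exact mul_right_cancel₀ hrootne h3

lemma one_ne_zero_Bop : (1 : HS.{u} n →L[ℂ] HS.{u} n) ≠ 0 := by
  intro h
  have h2 : (lp.single 2 (0 : ULift.{u} (Fin n → ℤ)) (1 : ℂ)) = (0 : HS.{u} n) := by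
    calc lp.single 2 (0 : ULift.{u} (Fin n → ℤ)) (1 : ℂ)
        = (1 : HS.{u} n →L[ℂ] HS.{u} n) (lp.single 2 (0 : ULift.{u} (Fin n → ℤ)) (1 : ℂ)) := rfl
      _ = (0 : HS.{u} n →L[ℂ] HS.{u} n) (lp.single 2 (0 : ULift.{u} (Fin n → ℤ)) (1 : ℂ)) := by
          rw [h]
      _ = 0 := rfl
  have h3 := congrArg (fun f : HS.{u} n => (f : ∀ _ : ULift.{u} (Fin n → ℤ), ℂ) 0) h2
  simp only [lp.single_apply_self] at h3
  rw [lp.coeFn_zero] at h3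
  exact one_ne_zero (h3.trans rfl)

end
end Stmt0Aux

/-- The universal C*-algebra generated by unitaries `u₁, …, uₙ` subject to
`uᵢ^{pᵢ} uⱼ^{pⱼ} = z_{ij} uⱼ^{pⱼ} uᵢ^{pᵢ}` is not simple when some `pᵢ ≥ 2`. -/
theorem stmt_0 (n : ℕ) (hn : 2 ≤ n) (p : Fin n → ℕ) (hp : ∀ i, 1 ≤ p i)
    (hp2 : ∃ i, 2 ≤ p i)
    (z : Fin n → Fin n → ℂ) (hzmod : ∀ i j, ‖z i j‖ = 1)
    (hzconj : ∀ i j, z i j = starRingEnd ℂ (z j i)) (hzdiag : ∀ i, z i i = 1)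
    (A : Type*) [NormedRing A] [StarRing A] [CStarRing A] [CompleteSpace A]
    [NormedAlgebra ℂ A] [StarModule ℂ A]
    (u : Fin n → A) (hu : ∀ i, u i ∈ unitary A)
    (hrel : ∀ i j, (u i) ^ (p i) * (u j) ^ (p j)
      = z i j • ((u j) ^ (p j) * (u i) ^ (p i)))
    (huniv : ∀ (B : Type*) [NormedRing B] [StarRing B] [CStarRing B] [CompleteSpace B]
      [NormedAlgebra ℂ B] [StarModule ℂ B] (w : Fin n → B),
      (∀ i, w i ∈ unitary B) →
      (∀ i j, (w i) ^ (p i) * (w j) ^ (p j)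
        = z i j • ((w j) ^ (p j) * (w i) ^ (p i))) →
      ∃ φ : A →⋆ₐ[ℂ] B, ∀ i, φ (u i) = w i) :
    ∃ I : TwoSidedIdeal A, IsClosed (I : Set A) ∧ I ≠ ⊥ ∧ I ≠ ⊤ := by
  classical
  letI : CStarAlgebra A := ⟨⟩
  open Stmt0Aux in
  obtain ⟨k, hk⟩ := hp2
  have h0n : 0 < n := by omega
  have h1n : 1 < n := by omega
  set j : Fin n := if k = ⟨0, h0n⟩ then ⟨1, h1n⟩ else ⟨0, h0n⟩ with hjdef
  have hkj : k ≠ j := by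
    rw [hjdef]
    split_ifs with h
    · rw [h]; intro hh; exact absurd (Fin.val_eq_of_eq hh) (by simp)
    · exact h
  set a0 : Fin n := if k < j then k else j with ha0
  set b0 : Fin n := if k < j then j else k with hb0
  set q0 : ℕ := p a0 * p b0 with hq0
  have hq02 : 2 ≤ q0 := by
    rw [hq0, ha0, hb0]
    split_ifs
    · calc 2 = 2 * 1 := rfl
      _ ≤ p k * p j := Nat.mul_le_mul hk (hp j)
    · calc 2 = 1 * 2 := rfl
      _ ≤ p j * p k := Nat.mul_le_mul (hp j) hk
  -- the two models
  set Bo := (HS n →L[ℂ] HS n) with hBo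
  set c : Bool → Fin n → Fin n → ℂ := fun m => cmat z p a0 b0 q0 m with hcdef
  have hcabs : ∀ m, ∀ i j', ‖c m i j'‖ = 1 := fun m => cmat_abs z p a0 b0 q0 m
  set W : Bool → Fin n → Bo := fun m i => Wop (c m) (hcabs m) i with hWdef
  have hWuni : ∀ m i, W m i ∈ unitary Bo := fun m i => Wop_unitary (c m) (hcabs m) i
  have hWcomm : ∀ m i j', W m i * W m j' = (c m i j' * (c m j' i)⁻¹) • (W m j' * W m i) :=
    fun m i j' => Wop_comm (c m) (hcabs m) i j'
  have hWrel : ∀ m, ∀ i j', W m i ^ p i * W m j' ^ p j'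
      = z i j' • (W m j' ^ p j' * W m i ^ p i) := by
    intro m i j'
    rw [pow_comm_smul (hWcomm m i j') (p i) (p j'),
      cmat_rel hzmod hzconj hzdiag hp hq0 m i j']
  obtain ⟨θ, hθ⟩ := huniv Bo (W false) (hWuni false) (hWrel false)
  obtain ⟨ψ, hψ⟩ := huniv Bo (W true) (hWuni true) (hWrel true)
  set μ : Bool → ℂ := fun m => c m k j * (c m j k)⁻¹ with hμdef
  have hone : (1 : Bo) ≠ 0 := Stmt0Aux.one_ne_zero_Bop
  have hμne : μ true ≠ μ false := by
    rw [hμdef]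
    refine cmat_mu_ne hzmod hq02 ?_
    rcases lt_or_gt_of_ne hkj with hlt | hgt
    · left
      exact ⟨hlt, by rw [ha0, if_pos hlt], by rw [hb0, if_pos hlt]⟩
    · right
      exact ⟨hgt, by rw [ha0, if_neg (not_lt_of_gt hgt)], by rw [hb0, if_neg (not_lt_of_gt hgt)]⟩
  -- the element a
  set a : A := u k * u j * star (u k) * star (u j) - μ false • 1 with hadef
  have hθa : θ a = 0 := by
    rw [hadef, map_sub, map_mul, map_mul, map_mul, map_star, map_star, map_smul, map_one,
      hθ, hθ]
    rw [comm_unitary (hWuni false k) (hWuni false j) (hWcomm false k j)]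
    exact sub_self _
  have hψa : ψ a ≠ 0 := by
    rw [hadef, map_sub, map_mul, map_mul, map_mul, map_star, map_star, map_smul, map_one,
      hψ, hψ]
    rw [comm_unitary (hWuni true k) (hWuni true j) (hWcomm true k j)]
    rw [← sub_smul]
    intro h
    rcases smul_eq_zero.mp h with h' | h'
    · exact hμne (sub_eq_zero.mp h')
    · exact hone h'
  have ha0' : a ≠ 0 := by
    intro h
    rw [h, map_zero] at hψa
    exact hψa rfl
  refine ⟨TwoSidedIdeal.ker θ, ?_, ?_, ?_⟩
  · have hset : ((TwoSidedIdeal.ker θ : TwoSidedIdeal A) : Set A) = θ ⁻¹' {0} := by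
      ext x
      simp [SetLike.mem_coe, TwoSidedIdeal.mem_ker]
    rw [hset]
    exact IsClosed.preimage (map_continuous θ) isClosed_singleton
  · intro h
    have : a ∈ TwoSidedIdeal.ker θ := (TwoSidedIdeal.mem_ker θ).mpr hθa
    rw [h] at this
    exact ha0' ((TwoSidedIdeal.mem_bot (R := A)).mp this)
  · intro h
    have : (1 : A) ∈ TwoSidedIdeal.ker θ := h ▸ TwoSidedIdeal.mem_top (R := A)
    have h1 := (TwoSidedIdeal.mem_ker θ).mp this
    rw [map_one] at h1
    exact hone h1
end
end

section
/- Let A be a unital C*-algebra containing unitaries u₁ and u₂ satisfying u₁² u₂ = -u₂ u₁², and suppose A has the universal property for this relation: for every unital C*-algebra B and unitaries w₁, w₂ in B satisfying w₁² w₂ = -w₂ w₁², there exists a unital *-homomorphism φ : A → B with φ(u₁) = w₁ and φ(u₂) = w₂. Then A is not simple, i.e. A possesses a closed two-sided ideal different from {0} and from A. -/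
open scoped Matrix.Norms.L2Operator CStarAlgebra
open Complex

namespace Stmt7Aux

universe u

variable {R : Type*}

instance uStar [Star R] : Star (ULift.{u} R) := ⟨fun x => ⟨star x.down⟩⟩

instance uStarRing [NonUnitalNonAssocSemiring R] [StarRing R] : StarRing (ULift.{u} R) where
  star_involutive x := by simp [star]
  star_mul x y := by apply ULift.ext; exact star_mul x.down y.down
  star_add x y := by apply ULift.ext; exact star_add x.down y.down

instance uCStar [NormedRing R] [StarRing R] [CStarRing R] : CStarRing (ULift.{u} R) where
  norm_mul_self_le x := CStarRing.norm_mul_self_le (x := x.down)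

instance uStarModule [NormedRing R] [StarRing R] [NormedAlgebra ℂ R] [StarModule ℂ R] :
    StarModule ℂ (ULift.{u} R) where
  star_smul c x := by apply ULift.ext; exact star_smul c x.down

noncomputable section

abbrev B2 : Type := Matrix (Fin 2) (Fin 2) ℂ

def ζ : ℂ := ⟨Real.sqrt 2 / 2, Real.sqrt 2 / 2⟩

lemma half : (Real.sqrt 2 / 2) * (Real.sqrt 2 / 2) = 1/2 := by
  rw [div_mul_div_comm, Real.mul_self_sqrt (by norm_num)]; norm_num

lemma ζ_sq : ζ * ζ = I := by
  apply Complex.ext <;> simp [ζ, Complex.mul_re, Complex.mul_im, half] <;> norm_num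

lemma ζ_sq' : ζ ^ 2 = I := by rw [pow_two, ζ_sq]

lemma ζ_mul_conj : ζ * (starRingEnd ℂ) ζ = 1 := by
  apply Complex.ext <;> simp [ζ, Complex.mul_re, Complex.mul_im, half] <;> norm_num

def w₁ : B2 := !![1, 0; 0, I]
def w₁' : B2 := !![ζ, 0; 0, I * ζ]
def w₂ : B2 := !![0, 1; 1, 0]

lemma hw₁ : w₁ ∈ unitary B2 := by
  constructor <;>
  · ext i j
    fin_cases i <;> fin_cases j <;>
      simp [w₁, Matrix.mul_apply, Fin.sum_univ_two, Matrix.conjTranspose_apply, Complex.ext_iff]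

lemma hw₁' : w₁' ∈ unitary B2 := by
  have h := ζ_mul_conj
  constructor <;>
  · ext i j
    fin_cases i <;> fin_cases j <;>
      simp [w₁', Matrix.mul_apply, Fin.sum_univ_two, Matrix.conjTranspose_apply] <;>
      ring_nf <;>
      simp_all [Complex.ext_iff, Complex.mul_re, Complex.mul_im] <;> linarith

lemma hw₂ : w₂ ∈ unitary B2 := by
  constructor <;>
  · ext i j
    fin_cases i <;> fin_cases j <;>
      simp [w₂, Matrix.mul_apply, Fin.sum_univ_two, Matrix.conjTranspose_apply]

lemma hrel₁ : w₁ ^ 2 * w₂ = -(w₂ * w₁ ^ 2) := by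
  ext i j
  fin_cases i <;> fin_cases j <;>
    simp [w₁, w₂, pow_two, Matrix.mul_apply, Fin.sum_univ_two, Complex.I_mul_I]

lemma hrel₁' : w₁' ^ 2 * w₂ = -(w₂ * w₁' ^ 2) := by
  ext i j
  fin_cases i <;> fin_cases j <;>
    simp [w₁', w₂, pow_two, Matrix.mul_apply, Fin.sum_univ_two] <;>
    ring_nf <;> simp [Complex.I_sq]

lemma hw₁_four : w₁ ^ 4 = 1 := by
  ext i j
  fin_cases i <;> fin_cases j <;>
    simp [w₁, pow_succ, Matrix.mul_apply, Fin.sum_univ_two, Matrix.one_apply, Complex.I_mul_I]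

lemma hw₁'_sq : w₁' ^ 2 = !![I, 0; 0, -I] := by
  ext i j
  fin_cases i <;> fin_cases j <;>
    simp [w₁', pow_two, Matrix.mul_apply, Fin.sum_univ_two, ζ_sq] <;>
    ring_nf <;> simp [Complex.I_sq, ζ_sq'] <;> ring_nf <;> simp [Complex.I_sq, ζ_sq']

lemma hw₁'_four : w₁' ^ 4 = -1 := by
  rw [show (4 : ℕ) = 2 * 2 from rfl, pow_mul, hw₁'_sq]
  ext i j
  fin_cases i <;> fin_cases j <;>
    simp [pow_two, Matrix.mul_apply, Fin.sum_univ_two, Matrix.one_apply, Complex.I_mul_I]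

/-- `ULift` versions. -/
lemma u_unitary {x : B2} (hx : x ∈ unitary B2) : (⟨x⟩ : ULift.{u} B2) ∈ unitary (ULift.{u} B2) := by
  constructor
  · apply ULift.ext; exact hx.1
  · apply ULift.ext; exact hx.2

lemma u_rel {x y : B2} (h : x ^ 2 * y = -(y * x ^ 2)) :
    (⟨x⟩ : ULift.{u} B2) ^ 2 * ⟨y⟩ = -(⟨y⟩ * (⟨x⟩ : ULift.{u} B2) ^ 2) := by
  apply ULift.ext; exact h

end

end Stmt7Aux

/-- The universal C*-algebra generated by unitaries `u₁, u₂` with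
`u₁² u₂ = -u₂ u₁²` is not simple. -/
theorem stmt_7 (A : Type*) [NormedRing A] [StarRing A] [CStarRing A] [CompleteSpace A]
    [NormedAlgebra ℂ A] [StarModule ℂ A]
    (u₁ u₂ : A) (hu₁ : u₁ ∈ unitary A) (hu₂ : u₂ ∈ unitary A)
    (hrel : u₁ ^ 2 * u₂ = -(u₂ * u₁ ^ 2))
    (huniv : ∀ (B : Type*) [NormedRing B] [StarRing B] [CStarRing B] [CompleteSpace B]
      [NormedAlgebra ℂ B] [StarModule ℂ B] (w₁ w₂ : B),
      w₁ ∈ unitary B → w₂ ∈ unitary B → w₁ ^ 2 * w₂ = -(w₂ * w₁ ^ 2) →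
      ∃ φ : A →⋆ₐ[ℂ] B, φ u₁ = w₁ ∧ φ u₂ = w₂) :
    ∃ I : TwoSidedIdeal A, IsClosed (I : Set A) ∧ I ≠ ⊥ ∧ I ≠ ⊤ := by
  classical
  obtain ⟨φ, hφ1, -⟩ := huniv (ULift Stmt7Aux.B2) ⟨Stmt7Aux.w₁⟩ ⟨Stmt7Aux.w₂⟩
    (Stmt7Aux.u_unitary Stmt7Aux.hw₁) (Stmt7Aux.u_unitary Stmt7Aux.hw₂)
    (Stmt7Aux.u_rel Stmt7Aux.hrel₁)
  obtain ⟨ψ, hψ1, -⟩ := huniv (ULift Stmt7Aux.B2) ⟨Stmt7Aux.w₁'⟩ ⟨Stmt7Aux.w₂⟩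
    (Stmt7Aux.u_unitary Stmt7Aux.hw₁') (Stmt7Aux.u_unitary Stmt7Aux.hw₂)
    (Stmt7Aux.u_rel Stmt7Aux.hrel₁')
  refine ⟨TwoSidedIdeal.ker φ, ?_, ?_, ?_⟩
  · have hcont : Continuous φ := by
      letI : CStarAlgebra A := {}
      letI : CStarAlgebra (ULift Stmt7Aux.B2) := {}
      exact map_continuous φ
    have : (TwoSidedIdeal.ker φ : Set A) = φ ⁻¹' {0} := by
      ext x; simp [TwoSidedIdeal.mem_ker]
    rw [this]
    exact isClosed_singleton.preimage hcont
  · -- nontrivial: q = u₁ ^ 4 - 1 is in the kernel but nonzero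
    intro hbot
    have hq : u₁ ^ 4 - 1 ∈ TwoSidedIdeal.ker φ := by
      rw [TwoSidedIdeal.mem_ker, map_sub, map_pow, map_one, hφ1]
      apply ULift.ext
      show Stmt7Aux.w₁ ^ 4 - 1 = 0
      rw [Stmt7Aux.hw₁_four, sub_self]
    rw [hbot, TwoSidedIdeal.mem_bot] at hq
    have hψq : ψ (u₁ ^ 4 - 1) = ⟨Stmt7Aux.w₁' ^ 4 - 1⟩ := by
      rw [map_sub, map_pow, map_one, hψ1]; rfl
    rw [hq, map_zero] at hψq
    have h0 : Stmt7Aux.w₁' ^ 4 - 1 = 0 := (congrArg ULift.down hψq).symm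
    rw [Stmt7Aux.hw₁'_four] at h0
    have h00 := congrFun (congrFun h0 0) 0
    simp [Matrix.one_apply] at h00
    norm_num at h00
  · intro htop
    have h1 : (1 : A) ∈ TwoSidedIdeal.ker φ := by rw [htop]; trivial
    rw [TwoSidedIdeal.mem_ker, map_one] at h1
    have : ((1 : Stmt7Aux.B2) 0 0) = (0 : Stmt7Aux.B2) 0 0 := by
      rw [show (1 : Stmt7Aux.B2) = (0 : Stmt7Aux.B2) from congrArg ULift.down h1]
    simp [Matrix.one_apply] at this
end

section
/- Let ε ∈ {1, -1} and let A be a unital C*-algebra containing unitaries u and v satisfying u² v = ε i·(v³ u⁷), and suppose A has the universal property for this relation: for every unital C*-algebra B and unitaries w₁, w₂ in B satisfying w₁² w₂ = ε i·(w₂³ w₁⁷), there exists a unital *-homomorphism φ : A → B with φ(u) = w₁ and φ(v) = w₂. Then 1_A ≠ 0_A, i.e. A is not the zero algebra. -/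
noncomputable instance : StarRing (ULift ℂ) where
  star x := ULift.up (star x.down)
  star_involutive x := by simp
  star_mul x y := ULift.ext _ _ (by simp [ULift.mul_down, star_mul, mul_comm])
  star_add x y := ULift.ext _ _ (by simp [ULift.add_down, star_add])

lemma ulift_star_down (x : ULift ℂ) : (star x).down = star x.down := rfl

instance : CStarRing (ULift ℂ) where
  norm_mul_self_le x := by
    have := CStarRing.norm_mul_self_le x.down
    rw [ULift.norm_def, ULift.norm_def, ULift.mul_down, ulift_star_down]
    exact this

instance : StarModule ℂ (ULift ℂ) where
  star_smul r x := ULift.ext _ _ (by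
    show star (r • x.down) = star r * star x.down
    simp [star_smul])

/-- The universal C*-algebra generated by unitaries `u`, `v` with
`u²v = ε i·(v³u⁷)` (with `ε ∈ {1, -1}`) is nonzero. -/
theorem stmt_11 (ε : ℂ) (hε : ε = 1 ∨ ε = -1)
    (A : Type*) [NormedRing A] [StarRing A] [CStarRing A] [CompleteSpace A]
    [NormedAlgebra ℂ A] [StarModule ℂ A]
    (u v : A) (hu : u ∈ unitary A) (hv : v ∈ unitary A)
    (hrel : u ^ 2 * v = (ε * Complex.I) • (v ^ 3 * u ^ 7))
    (huniv : ∀ (B : Type*) [NormedRing B] [StarRing B] [CStarRing B] [CompleteSpace B]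
      [NormedAlgebra ℂ B] [StarModule ℂ B] (w₁ w₂ : B),
      w₁ ∈ unitary B → w₂ ∈ unitary B →
      w₁ ^ 2 * w₂ = (ε * Complex.I) • (w₂ ^ 3 * w₁ ^ 7) →
      ∃ φ : A →⋆ₐ[ℂ] B, φ u = w₁ ∧ φ v = w₂) :
    (1 : A) ≠ 0 := by
  have hs : ((Real.sqrt 2 : ℝ) : ℂ) ^ 2 = 2 := by
    rw [← Complex.ofReal_pow, Real.sq_sqrt (by norm_num : (0:ℝ) ≤ 2)]
    norm_num
  have hs0 : ((Real.sqrt 2 : ℝ) : ℂ) ≠ 0 := by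
    intro h; rw [h] at hs; norm_num at hs
  set z : ℂ := (1 - ε * Complex.I) / (Real.sqrt 2 : ℂ) with hz
  have hεsq : ε ^ 2 = 1 := by rcases hε with h | h <;> simp [h]
  have hεc : (starRingEnd ℂ) ε = ε := by rcases hε with h | h <;> simp [h]
  -- z is a unitary complex number
  have hzu : star z * z = 1 := by
    rw [hz, Complex.star_def, map_div₀, map_sub, map_one, map_mul, hεc,
      Complex.conj_I, Complex.conj_ofReal]
    rw [div_mul_div_comm]
    rw [show ((Real.sqrt 2 : ℝ):ℂ) * ((Real.sqrt 2 : ℝ):ℂ) = ((Real.sqrt 2 : ℝ):ℂ)^2 by ring, hs]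
    field_simp
    linear_combination (-Complex.I ^ 2) * hεsq - Complex.I_sq
  have hzu' : z * star z = 1 := by rw [mul_comm]; exact hzu
  have hsq : z ^ 2 = -(ε * Complex.I) := by
    rw [hz, div_pow, hs]
    field_simp
    linear_combination Complex.I ^ 2 * hεsq + Complex.I_sq
  have hz3 : (ε * Complex.I) * z ^ 3 = z := by
    rw [pow_succ, hsq]
    linear_combination (-Complex.I ^ 2 * z) * hεsq - z * Complex.I_sq
  -- lift to ULift ℂ
  set w₁ : ULift ℂ := ULift.up 1 with hw₁
  set w₂ : ULift ℂ := ULift.up z with hw₂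
  have hu1 : w₁ ∈ unitary (ULift ℂ) := by
    rw [Unitary.mem_iff]
    constructor <;> exact ULift.ext _ _ (by simp [hw₁, ulift_star_down])
  have hu2 : w₂ ∈ unitary (ULift ℂ) := by
    rw [Unitary.mem_iff]
    refine ⟨ULift.ext _ _ ?_, ULift.ext _ _ ?_⟩
    · simpa [ULift.mul_down, ulift_star_down, hw₂] using hzu
    · simpa [ULift.mul_down, ulift_star_down, hw₂] using hzu'
  have hrel2 : w₁ ^ 2 * w₂ = (ε * Complex.I) • (w₂ ^ 3 * w₁ ^ 7) := by
    refine ULift.ext _ _ ?_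
    show (w₁.down) ^ 2 * w₂.down = (ε * Complex.I) • ((w₂.down) ^ 3 * (w₁.down) ^ 7)
    simp only [hw₁, hw₂, one_pow, one_mul, mul_one, smul_eq_mul]
    exact hz3.symm
  obtain ⟨φ, hφu, hφv⟩ := huniv (ULift ℂ) w₁ w₂ hu1 hu2 hrel2
  intro h
  have h1 := map_one φ
  rw [h, map_zero] at h1
  have : (1 : ℂ) = 0 := congrArg ULift.down h1.symm
  exact one_ne_zero this
end

section
/- Let A be a unital C*-algebra containing unitaries u and v satisfying u⁴ v = -(v³ u⁷ v² u⁷), and suppose A has the universal property for this relation: for every unital C*-algebra B and unitaries w₁, w₂ in B satisfying w₁⁴ w₂ = -(w₂³ w₁⁷ w₂² w₁⁷), there exists a unital *-homomorphism φ : A → B with φ(u) = w₁ and φ(v) = w₂. Then A is not simple, i.e. A possesses a closed two-sided ideal different from {0} and from A. -/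
noncomputable instance : StarRing (ULift.{u} ℂ) where
  star x := ⟨star x.down⟩
  star_involutive x := by ext; simp
  star_mul x y := by ext; show star (x.down * y.down) = star y.down * star x.down; simp [mul_comm]
  star_add x y := by ext; show star (x.down + y.down) = star x.down + star y.down; simp

instance : CStarRing (ULift.{u} ℂ) where
  norm_mul_self_le x := CStarRing.norm_mul_self_le x.down

instance : StarModule ℂ (ULift.{u} ℂ) where
  star_smul c x := by ext; show star (c • x.down) = star c • star x.down; simp

lemma aux_w2 : (Complex.exp (Real.pi * Complex.I / 4)) ∈ unitary ℂ ∧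
    (Complex.exp (Real.pi * Complex.I / 4)) ^ 4 = -1 := by
  set w : ℂ := Complex.exp (Real.pi * Complex.I / 4) with hw
  have hstar : star w = Complex.exp (-(Real.pi * Complex.I / 4)) := by
    rw [hw, RCLike.star_def, ← Complex.exp_conj]
    congr 1
    simp [Complex.conj_I, map_ofNat]
    ring
  have hmul : star w * w = 1 := by
    rw [hstar, hw, ← Complex.exp_add]; simp
  refine ⟨Unitary.mem_iff.mpr ⟨hmul, by rw [mul_comm] at hmul; exact hmul⟩, ?_⟩
  have : w ^ 4 = Complex.exp ((4 : ℕ) * (Real.pi * Complex.I / 4)) := by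
    rw [Complex.exp_nat_mul]
  rw [this]
  have h4 : ((4 : ℕ) : ℂ) * (Real.pi * Complex.I / 4) = Real.pi * Complex.I := by
    push_cast; ring
  rw [h4, Complex.exp_pi_mul_I]

/-- The universal C*-algebra generated by unitaries `u`, `v` with
`u⁴v = -(v³u⁷v²u⁷)` is not simple. -/
theorem stmt_13 (A : Type*) [NormedRing A] [StarRing A] [CStarRing A] [CompleteSpace A]
    [NormedAlgebra ℂ A] [StarModule ℂ A]
    (u v : A) (hu : u ∈ unitary A) (hv : v ∈ unitary A)
    (hrel : u ^ 4 * v = -(v ^ 3 * u ^ 7 * v ^ 2 * u ^ 7))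
    (huniv : ∀ (B : Type*) [NormedRing B] [StarRing B] [CStarRing B] [CompleteSpace B]
      [NormedAlgebra ℂ B] [StarModule ℂ B] (w₁ w₂ : B),
      w₁ ∈ unitary B → w₂ ∈ unitary B →
      w₁ ^ 4 * w₂ = -(w₂ ^ 3 * w₁ ^ 7 * w₂ ^ 2 * w₁ ^ 7) →
      ∃ φ : A →⋆ₐ[ℂ] B, φ u = w₁ ∧ φ v = w₂) :
    ∃ I : TwoSidedIdeal A, IsClosed (I : Set A) ∧ I ≠ ⊥ ∧ I ≠ ⊤ := by
  set w : ℂ := Complex.exp (Real.pi * Complex.I / 4) with hw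
  obtain ⟨hwu, hw4⟩ := aux_w2
  have hw8 : w ^ 8 = 1 := by
    have : w ^ 8 = (w ^ 4) ^ 2 := by ring
    rw [this, hw4]; ring
  -- the complex relation for any 4th root of -1
  have hrelC : ∀ z : ℂ, z ^ 4 = -1 →
      (1 : ℂ) ^ 4 * z = -(z ^ 3 * 1 ^ 7 * z ^ 2 * 1 ^ 7) := by
    intro z hz
    have : z ^ 3 * z ^ 2 = z ^ 4 * z := by ring
    simp only [one_pow, one_mul, mul_one, this, hz]
    ring
  have hw3 : (w ^ 3) ^ 4 = -1 := by
    have : (w ^ 3) ^ 4 = w ^ 8 * w ^ 4 := by ring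
    rw [this, hw8, hw4]; ring
  -- transport to ULift ℂ
  let e : ℂ →+* ULift ℂ := (ULift.ringEquiv (R := ℂ)).symm.toRingHom
  have he_star : ∀ z : ℂ, star (e z) = e (star z) := fun z => rfl
  have heu : ∀ z : ℂ, z ∈ unitary ℂ → e z ∈ unitary (ULift ℂ) := by
    intro z hz
    rw [Unitary.mem_iff] at hz ⊢
    constructor
    · rw [he_star, ← map_mul, hz.1, map_one]
    · rw [he_star, ← map_mul, hz.2, map_one]
  have herel : ∀ z : ℂ, (1:ℂ) ^ 4 * z = -(z ^ 3 * 1 ^ 7 * z ^ 2 * 1 ^ 7) →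
      (e 1) ^ 4 * (e z) = -((e z) ^ 3 * (e 1) ^ 7 * (e z) ^ 2 * (e 1) ^ 7) := by
    intro z hz
    simp only [← map_pow, ← map_mul, ← map_neg]
    exact congrArg e hz
  have he1 : e 1 = 1 := map_one e
  obtain ⟨φ, hφu, hφv⟩ := huniv (ULift ℂ) (e 1) (e w)
    (he1 ▸ (Unitary.mem_iff.mpr ⟨by simp, by simp⟩ : (1 : ULift ℂ) ∈ unitary _))
    (heu w hwu) (herel w (hrelC w hw4))
  obtain ⟨ψ, hψu, hψv⟩ := huniv (ULift ℂ) (e 1) (e (w ^ 3))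
    (he1 ▸ (Unitary.mem_iff.mpr ⟨by simp, by simp⟩ : (1 : ULift ℂ) ∈ unitary _))
    (heu _ (pow_mem hwu 3)) (herel _ (hrelC _ hw3))
  letI : CStarAlgebra A :=
    { ‹NormedRing A›, ‹StarRing A›, ‹CStarRing A›, ‹NormedAlgebra ℂ A›, ‹StarModule ℂ A›,
      ‹CompleteSpace A› with }
  letI : CStarAlgebra (ULift ℂ) :=
    { (inferInstance : NormedRing (ULift ℂ)), (inferInstance : StarRing (ULift ℂ)),
      (inferInstance : CStarRing (ULift ℂ)), (inferInstance : NormedAlgebra ℂ (ULift ℂ)),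
      (inferInstance : StarModule ℂ (ULift ℂ)), (inferInstance : CompleteSpace (ULift ℂ)) with }
  refine ⟨TwoSidedIdeal.ker φ.toRingHom, ?_, ?_, ?_⟩
  · have hc : Continuous φ := AddMonoidHomClass.continuous_of_bound φ 1
      (by simpa only [one_mul] using fun a => NonUnitalStarAlgHom.norm_apply_le φ a)
    have : (TwoSidedIdeal.ker φ.toRingHom : Set A) = φ ⁻¹' {0} := by
      ext x
      rw [SetLike.mem_coe, TwoSidedIdeal.mem_ker]
      rfl
    rw [this]
    exact isClosed_singleton.preimage hc
  · intro h
    have hwne : w ≠ 0 := Complex.exp_ne_zero _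
    have hne : w ≠ w ^ 3 := by
      intro hcon
      have h2 : (1 : ℂ) = w ^ 2 :=
        mul_left_cancel₀ hwne (show w * 1 = w * w ^ 2 by linear_combination hcon)
      have hcontra : (1 : ℂ) = -1 := by
        rw [← hw4, show w ^ 4 = (w ^ 2) ^ 2 by ring, ← h2]; ring
      norm_num at hcontra
    have halg : ∀ z : ℂ, algebraMap ℂ (ULift ℂ) z = e z := fun z => rfl
    have hx : (v - algebraMap ℂ A w) ∈ TwoSidedIdeal.ker φ.toRingHom := by
      rw [TwoSidedIdeal.mem_ker]
      show φ (v - algebraMap ℂ A w) = 0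
      rw [map_sub, hφv, AlgHomClass.commutes, halg, sub_self]
    rw [h, TwoSidedIdeal.mem_bot] at hx
    have hψx : ψ (v - algebraMap ℂ A w) = 0 := by rw [hx, map_zero]
    rw [map_sub, hψv, AlgHomClass.commutes, halg, sub_eq_zero] at hψx
    have : w ^ 3 = w := (ULift.ringEquiv (R := ℂ)).symm.injective hψx
    exact hne this.symm
  · intro h
    have : (1 : A) ∈ TwoSidedIdeal.ker φ.toRingHom := h ▸ TwoSidedIdeal.mem_top _
    rw [TwoSidedIdeal.mem_ker] at this
    simp at this
end
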